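/- The function f_{ε,δ}(α) = max{0, 1 − δ − e^ε α, e^{−ε}(1 − δ − α)} is a symmetric trade-off function: it is convex, continuous, non-increasing, satisfies f_{ε,δ}(α) ≤ 1 − α, and equals its own left-continuous inverse. -/
import Mathlib


open Set

/-- `f_{ε,δ}(α) = max{0, 1 - δ - e^ε α, e^{-ε}(1 - δ - α)}`. -/
noncomputable def fed (ε δ α : ℝ) : ℝ :=
  max 0 (max (1 - δ - Real.exp ε * α) (Real.exp (-ε) * (1 - δ - α)))

lemma fed_nonneg (ε δ α : ℝ) : 0 ≤ fed ε δ α := le_max_left _ _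

lemma affine_convexOn (a b : ℝ) : ConvexOn ℝ (Icc (0:ℝ) 1) (fun x => a * x + b) := by
  refine ⟨convex_Icc 0 1, ?_⟩
  intro x _ y _ s t hs ht hst
  apply le_of_eq
  simp only [smul_eq_mul]
  linear_combination (-b) * hst

lemma fed_antitoneOn (ε δ : ℝ) : AntitoneOn (fed ε δ) (Icc (0:ℝ) 1) := by
  intro a _ b _ hab
  unfold fed
  have hE := (Real.exp_pos ε).le
  have hF := (Real.exp_pos (-ε)).le
  apply max_le (le_max_left _ _)
  apply max_le
  · exact le_trans (by nlinarith) (le_trans (le_max_left _ _) (le_max_right _ _))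
  · exact le_trans (by nlinarith) (le_trans (le_max_right _ _) (le_max_right _ _))

lemma fed_le (ε δ : ℝ) (hε : 0 ≤ ε) (hδ0 : 0 ≤ δ) :
    ∀ α ∈ Icc (0:ℝ) 1, fed ε δ α ≤ 1 - α := by
  intro α ⟨h0, h1⟩
  have hE : 1 ≤ Real.exp ε := Real.one_le_exp hε
  have hF1 : Real.exp (-ε) ≤ 1 := Real.exp_le_one_iff.mpr (by linarith)
  have hF0 := (Real.exp_pos (-ε)).le
  apply max_le (by linarith)
  apply max_le
  · nlinarith
  · rcases le_or_gt (1 - δ - α) 0 with h | h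
    · nlinarith
    · nlinarith

lemma fed_fed_le (ε δ t : ℝ) (ht : 0 ≤ t) : fed ε δ (fed ε δ t) ≤ t := by
  have hE : Real.exp ε * Real.exp (-ε) = 1 := by
    rw [← Real.exp_add]; simp
  have h1 : 1 - δ - Real.exp ε * t ≤ fed ε δ t :=
    le_trans (le_max_left _ _) (le_max_right _ _)
  have h2 : Real.exp (-ε) * (1 - δ - t) ≤ fed ε δ t :=
    le_trans (le_max_right _ _) (le_max_right _ _)
  have hEp := (Real.exp_pos ε).le
  have hFp := (Real.exp_pos (-ε)).le
  apply max_le ht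
  apply max_le
  · -- 1 - δ - exp ε * fed t ≤ t
    have := mul_le_mul_of_nonneg_left h2 hEp
    have heq : Real.exp ε * (Real.exp (-ε) * (1 - δ - t)) = 1 - δ - t := by
      rw [← mul_assoc, hE, one_mul]
    nlinarith
  · -- exp (-ε) * (1 - δ - fed t) ≤ t
    have := mul_le_mul_of_nonneg_left h1 hFp
    have heq : Real.exp (-ε) * (Real.exp ε * t) = t := by
      rw [← mul_assoc, mul_comm (Real.exp (-ε)), hE, one_mul]
    nlinarith

/-- `f_{ε,δ}` is a symmetric trade-off function: convex, continuous, non-increasing,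
below `1 - α` on `[0,1]`, and equal to its own left-continuous inverse
`α ↦ inf{t ∈ [0,1] : f_{ε,δ}(t) ≤ α}`. -/
theorem statement7 (ε δ : ℝ) (hε : 0 ≤ ε) (hδ : δ ∈ Icc (0:ℝ) 1) :
    ConvexOn ℝ (Icc (0:ℝ) 1) (fed ε δ) ∧
    ContinuousOn (fed ε δ) (Icc (0:ℝ) 1) ∧
    AntitoneOn (fed ε δ) (Icc (0:ℝ) 1) ∧
    (∀ α ∈ Icc (0:ℝ) 1, fed ε δ α ≤ 1 - α) ∧
    (∀ α ∈ Icc (0:ℝ) 1, sInf {t : ℝ | t ∈ Icc (0:ℝ) 1 ∧ fed ε δ t ≤ α} = fed ε δ α) := by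
  obtain ⟨hδ0, hδ1⟩ := hδ
  refine ⟨?_, ?_, fed_antitoneOn ε δ, fed_le ε δ hε hδ0, ?_⟩
  · -- convexity
    have c0 : ConvexOn ℝ (Icc (0:ℝ) 1) (fun _ : ℝ => (0:ℝ)) :=
      convexOn_const 0 (convex_Icc 0 1)
    have c1 : ConvexOn ℝ (Icc (0:ℝ) 1) (fun α => 1 - δ - Real.exp ε * α) := by
      have := affine_convexOn (-(Real.exp ε)) (1 - δ)
      convert this using 2 with x
      ring
    have c2 : ConvexOn ℝ (Icc (0:ℝ) 1) (fun α => Real.exp (-ε) * (1 - δ - α)) := by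
      have := affine_convexOn (-(Real.exp (-ε))) (Real.exp (-ε) * (1 - δ))
      convert this using 2 with x
      ring
    exact c0.sup (c1.sup c2)
  · -- continuity
    apply Continuous.continuousOn
    unfold fed
    fun_prop
  · -- inverse
    intro α hα
    obtain ⟨hα0, hα1⟩ := hα
    have hmem : fed ε δ α ∈ {t : ℝ | t ∈ Icc (0:ℝ) 1 ∧ fed ε δ t ≤ α} := by
      refine ⟨⟨fed_nonneg ε δ α, ?_⟩, fed_fed_le ε δ α hα0⟩
      have := fed_le ε δ hε hδ0 α ⟨hα0, hα1⟩
      linarith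
    apply le_antisymm
    · exact csInf_le ⟨0, fun t ht => ht.1.1⟩ hmem
    · apply le_csInf ⟨_, hmem⟩
      intro t ht
      obtain ⟨⟨ht0, ht1⟩, htα⟩ := ht
      have hft : fed ε δ t ∈ Icc (0:ℝ) 1 := by
        refine ⟨fed_nonneg ε δ t, ?_⟩
        have := fed_le ε δ hε hδ0 t ⟨ht0, ht1⟩
        linarith
      calc fed ε δ α ≤ fed ε δ (fed ε δ t) :=
            fed_antitoneOn ε δ hft ⟨hα0, hα1⟩ htα
        _ ≤ t := fed_fed_le ε δ t ht0
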